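/- Let (Y₀, Y₁) be an independent pair of observations, and for each K define the finite-sample expected score classifier f_Y(y;K) = (1/K)Σ_{i=1}^K f_X(g(y, Z_i)) with i.i.d. seeds. Assume that almost surely over (Y₀,Y₁) the quantity μ(Y₀,Y₁) := E_Z[f_X(g(Y₁,Z))] − E_Z[f_X(g(Y₀,Z))] is nonzero and has the same sign as π(C=1|Y₁) − π(C=1|Y₀). Then lim_{K→∞} P(f_Y(Y₀;K) ≤ f_Y(Y₁;K)) = P(π(C=1|Y₁) ≥ π(C=1|Y₀)). -/

import Mathlib

open MeasureTheory ProbabilityTheory Filter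
open Topology

/-- asymptotic AUROC of the finite-sample expected score classifier.
If, almost surely over the independent pair `(Y₀, Y₁)`, the population expected-score gap
`E_Z[fX (g Y₁ Z)] − E_Z[fX (g Y₀ Z)]` is nonzero and has the same sign as
`π(C=1|Y₁) − π(C=1|Y₀)`, then
`P(f_Y(Y₀;K) ≤ f_Y(Y₁;K)) → P(π(C=1|Y₁) ≥ π(C=1|Y₀))` as `K → ∞`. -/
theorem auroc_limit_of_expected_score_classifier
    {Ω 𝒳 𝒴 𝒵 : Type*} [MeasurableSpace Ω] [MeasurableSpace 𝒳] [MeasurableSpace 𝒴]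
    [MeasurableSpace 𝒵]
    (μ : Measure Ω) [IsProbabilityMeasure μ]
    (Y₀ Y₁ : Ω → 𝒴) (hY₀ : Measurable Y₀) (hY₁ : Measurable Y₁)
    (Z Z' : ℕ → Ω → 𝒵) (hZ : ∀ i, Measurable (Z i)) (hZ' : ∀ i, Measurable (Z' i))
    (ζ : Measure 𝒵) [IsProbabilityMeasure ζ]
    -- the seed pairs `(Z i, Z' i)` are i.i.d., with `Z i, Z' i` independent, each of law `ζ`:
    (hseed_law : ∀ i, μ.map (fun ω => (Z i ω, Z' i ω)) = ζ.prod ζ)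
    (hseed_indep : iIndepFun (fun i ω => (Z i ω, Z' i ω)) μ)
    -- the seeds are independent of the pair `(Y₀, Y₁)`:
    (hindep : IndepFun (fun ω => (Y₀ ω, Y₁ ω)) (fun ω (i : ℕ) => (Z i ω, Z' i ω)) μ)
    (g : 𝒴 → 𝒵 → 𝒳) (hg : Measurable (Function.uncurry g))
    (fX : 𝒳 → ℝ) (hfX : Measurable fX) (hfX01 : ∀ x, fX x ∈ Set.Icc (0 : ℝ) 1)
    (q : 𝒴 → ℝ) (hq : Measurable q)   -- `q y = π(C=1|Y=y)`
    -- a.s. the population expected-score gap is nonzero and of the same sign as `q Y₁ − q Y₀`: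
    (hsign : ∀ᵐ ω ∂μ,
      ((∫ z, fX (g (Y₁ ω) z) ∂ζ) - ∫ z, fX (g (Y₀ ω) z) ∂ζ) ≠ 0 ∧
      0 < ((∫ z, fX (g (Y₁ ω) z) ∂ζ) - ∫ z, fX (g (Y₀ ω) z) ∂ζ) * (q (Y₁ ω) - q (Y₀ ω))) :
    Tendsto
      (fun K : ℕ => μ {ω |
        (∑ i ∈ Finset.range K, fX (g (Y₀ ω) (Z i ω))) / K
          ≤ (∑ i ∈ Finset.range K, fX (g (Y₁ ω) (Z' i ω))) / K})
      atTop (nhds (μ {ω | q (Y₀ ω) ≤ q (Y₁ ω)})) := by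
  classical
  -- basic measurability
  have hF : Measurable (fun p : 𝒴 × 𝒵 => fX (g p.1 p.2)) := hfX.comp hg
  set φ : 𝒴 → ℝ := fun y => ∫ z, fX (g y z) ∂ζ with hφdef
  have hφm : Measurable φ := by
    have := (hF.stronglyMeasurable).integral_prod_right' (ν := ζ)
    exact this.measurable
  have hgy : ∀ y : 𝒴, Measurable (fun z => fX (g y z)) :=
    fun y => hF.comp measurable_prodMk_left
  -- the seed sequence and the pair of labels
  set S : Ω → (ℕ → 𝒵 × 𝒵) := fun ω i => (Z i ω, Z' i ω) with hSdef
  have hS : Measurable S := measurable_pi_lambda _ (fun i => (hZ i).prodMk (hZ' i))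
  set YP : Ω → 𝒴 × 𝒴 := fun ω => (Y₀ ω, Y₁ ω) with hYPdef
  have hYP : Measurable YP := hY₀.prodMk hY₁
  set η : Measure (𝒴 × 𝒴) := μ.map YP with hηdef
  set κ : Measure (ℕ → 𝒵 × 𝒵) := μ.map S with hκdef
  haveI : IsProbabilityMeasure η := Measure.isProbabilityMeasure_map hYP.aemeasurable
  haveI : IsProbabilityMeasure κ := Measure.isProbabilityMeasure_map hS.aemeasurable
  set Φ : Ω → (𝒴 × 𝒴) × (ℕ → 𝒵 × 𝒵) := fun ω => (YP ω, S ω) with hΦdef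
  have hΦ : Measurable Φ := hYP.prodMk hS
  have hν : μ.map Φ = η.prod κ :=
    (indepFun_iff_map_prod_eq_prod_map_map hYP.aemeasurable hS.aemeasurable).mp hindep
  -- strong law for a fixed y, for either coordinate projection of the seed pairs
  have key : ∀ (pr : 𝒵 × 𝒵 → 𝒵), Measurable pr → (ζ.prod ζ).map pr = ζ → ∀ y : 𝒴,
      ∀ᵐ ω ∂μ, Tendsto
        (fun K : ℕ => (∑ i ∈ Finset.range K, fX (g y (pr (Z i ω, Z' i ω)))) / K)
        atTop (𝓝 (φ y)) := by
    intro pr hpr hprlaw y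
    set h : 𝒵 × 𝒵 → ℝ := fun p => fX (g y (pr p)) with hhdef
    have hh : Measurable h := (hgy y).comp hpr
    set X : ℕ → Ω → ℝ := fun i ω => h (Z i ω, Z' i ω) with hXdef
    have hXm : ∀ i, Measurable (X i) := fun i => hh.comp ((hZ i).prodMk (hZ' i))
    have hmapX : ∀ j, μ.map (X j) = (ζ.prod ζ).map h := by
      intro j
      rw [← hseed_law j, Measure.map_map hh ((hZ j).prodMk (hZ' j))]
      rfl
    have hident : ∀ i, IdentDistrib (X i) (X 0) μ μ := fun i =>
      ⟨(hXm i).aemeasurable, (hXm 0).aemeasurable, by rw [hmapX i, hmapX 0]⟩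
    have hindep' : Pairwise (Function.onFun (IndepFun · · μ) X) := by
      intro i j hij
      exact (hseed_indep.comp (fun _ => h) (fun _ => hh)).indepFun hij
    have hbdd : ∀ i ω, ‖X i ω‖ ≤ 1 := by
      intro i ω
      have := hfX01 (g y (pr (Z i ω, Z' i ω)))
      rw [Real.norm_eq_abs, abs_le]
      constructor <;> linarith [this.1, this.2]
    have hint : Integrable (X 0) μ :=
      ⟨(hXm 0).aestronglyMeasurable, HasFiniteIntegral.of_bounded (ae_of_all μ (hbdd 0))⟩
    have hmean : (∫ ω, X 0 ω ∂μ) = φ y := by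
      rw [← integral_map ((hZ 0).prodMk (hZ' 0)).aemeasurable hh.aestronglyMeasurable,
        hseed_law 0, ← integral_map hpr.aemeasurable (hgy y).aestronglyMeasurable, hprlaw]
    have := strong_law_ae_real X hint hindep' hident
    rw [hmean] at this
    exact this
  have hfst : (ζ.prod ζ).map Prod.fst = ζ := by
    rw [Measure.map_fst_prod]; simp
  have hsnd : (ζ.prod ζ).map Prod.snd = ζ := by
    rw [Measure.map_snd_prod]; simp
  -- the events, on the product space
  set u₀ : ℕ → (𝒴 × 𝒴) × (ℕ → 𝒵 × 𝒵) → ℝ :=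
    fun K p => (∑ i ∈ Finset.range K, fX (g p.1.1 (p.2 i).1)) / K with hu₀def
  set u₁ : ℕ → (𝒴 × 𝒴) × (ℕ → 𝒵 × 𝒵) → ℝ :=
    fun K p => (∑ i ∈ Finset.range K, fX (g p.1.2 (p.2 i).2)) / K with hu₁def
  have hu₀m : ∀ K, Measurable (u₀ K) := by
    intro K
    apply Measurable.div_const
    exact Finset.measurable_sum _ (fun i _ =>
      hF.comp ((measurable_fst.fst).prodMk ((measurable_pi_apply i).comp measurable_snd).fst))
  have hu₁m : ∀ K, Measurable (u₁ K) := by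
    intro K
    apply Measurable.div_const
    exact Finset.measurable_sum _ (fun i _ =>
      hF.comp ((measurable_fst.snd).prodMk ((measurable_pi_apply i).comp measurable_snd).snd))
  set A : ℕ → Set ((𝒴 × 𝒴) × (ℕ → 𝒵 × 𝒵)) := fun K => {p | u₀ K p ≤ u₁ K p} with hAdef
  have hmA : ∀ K, MeasurableSet (A K) := fun K => measurableSet_le (hu₀m K) (hu₁m K)
  set L : Set ((𝒴 × 𝒴) × (ℕ → 𝒵 × 𝒵)) := {p | q p.1.1 ≤ q p.1.2} with hLdef
  have hmL : MeasurableSet L :=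
    measurableSet_le (hq.comp measurable_fst.fst) (hq.comp measurable_fst.snd)
  -- rewrite the measures in the goal via the product measure
  have hAeq : ∀ K, μ {ω |
      (∑ i ∈ Finset.range K, fX (g (Y₀ ω) (Z i ω))) / K
        ≤ (∑ i ∈ Finset.range K, fX (g (Y₁ ω) (Z' i ω))) / K} = (η.prod κ) (A K) := by
    intro K
    rw [← hν, Measure.map_apply hΦ (hmA K)]
    rfl
  have hLeq : μ {ω | q (Y₀ ω) ≤ q (Y₁ ω)} = (η.prod κ) L := by
    rw [← hν, Measure.map_apply hΦ hmL]
    rfl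
  -- good set: a.s. convergence of the empirical means
  set G : Set ((𝒴 × 𝒴) × (ℕ → 𝒵 × 𝒵)) :=
    {p | Tendsto (fun K => u₁ K p - u₀ K p) atTop (𝓝 (φ p.1.2 - φ p.1.1))} with hGdef
  have hdm : Measurable (fun p : (𝒴 × 𝒴) × (ℕ → 𝒵 × 𝒵) => φ p.1.2 - φ p.1.1) :=
    (hφm.comp measurable_fst.snd).sub (hφm.comp measurable_fst.fst)
  have hmG : MeasurableSet G :=
    measurableSet_tendsto_fun (fun K => (hu₁m K).sub (hu₀m K)) hdm
  have hGae : ∀ᵐ p ∂(η.prod κ), p ∈ G := by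
    rw [ae_iff]
    have hset : {p | ¬ p ∈ G} = Gᶜ := rfl
    rw [hset, Measure.measure_prod_null hmG.compl]
    refine ae_of_all η (fun y => ?_)
    show κ (Prod.mk y ⁻¹' Gᶜ) = 0
    have h0 := key Prod.fst measurable_fst hfst y.1
    have h1 := key Prod.snd measurable_snd hsnd y.2
    have hae : ∀ᵐ ω ∂μ, S ω ∈ Prod.mk y ⁻¹' G := by
      filter_upwards [h0, h1] with ω hω0 hω1
      exact hω1.sub hω0
    have hmap : κ (Prod.mk y ⁻¹' Gᶜ) = μ (S ⁻¹' (Prod.mk y ⁻¹' Gᶜ)) :=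
      Measure.map_apply hS (measurable_prodMk_left hmG.compl)
    rw [hmap]
    rw [ae_iff] at hae
    exact hae
  -- sign condition on the product space
  set Hs : Set ((𝒴 × 𝒴) × (ℕ → 𝒵 × 𝒵)) :=
    {p | (φ p.1.2 - φ p.1.1) ≠ 0 ∧ 0 < (φ p.1.2 - φ p.1.1) * (q p.1.2 - q p.1.1)} with hHsdef
  have hmHs : MeasurableSet Hs := by
    have h1 : Measurable (fun p : (𝒴 × 𝒴) × (ℕ → 𝒵 × 𝒵) => φ p.1.2 - φ p.1.1) :=
      (hφm.comp measurable_fst.snd).sub (hφm.comp measurable_fst.fst)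
    have h2 : Measurable (fun p : (𝒴 × 𝒴) × (ℕ → 𝒵 × 𝒵) => q p.1.2 - q p.1.1) :=
      (hq.comp measurable_fst.snd).sub (hq.comp measurable_fst.fst)
    exact ((h1 (measurableSet_singleton (0:ℝ))).compl).inter
      (measurableSet_lt measurable_const (h1.mul h2))
  have hHsae : ∀ᵐ p ∂(η.prod κ), p ∈ Hs := by
    rw [← hν]
    exact (ae_map_iff hΦ.aemeasurable hmHs).mpr hsign
  -- a.e. convergence of the indicators
  have hind : ∀ᵐ p ∂(η.prod κ),
      Tendsto (fun K => (A K).indicator (fun _ => (1:ℝ)) p) atTop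
        (𝓝 (L.indicator (fun _ => (1:ℝ)) p)) := by
    filter_upwards [hGae, hHsae] with p hpG hpH
    rcases lt_or_gt_of_ne hpH.1 with hlt | hgt
    · -- gap < 0 : eventually not in A K, and not in L
      have hev : ∀ᶠ K in atTop, u₁ K p - u₀ K p < 0 :=
        hpG.eventually (eventually_lt_nhds hlt)
      have hqlt : q p.1.2 - q p.1.1 < 0 := by nlinarith [hpH.2]
      have hnotL : p ∉ L := by
        simp only [L, Set.mem_setOf_eq, not_le]
        linarith
      rw [Set.indicator_of_notMem hnotL]
      refine Tendsto.congr' ?_ tendsto_const_nhds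
      filter_upwards [hev] with K hK
      have : p ∉ A K := by
        simp only [A, Set.mem_setOf_eq, not_le]
        linarith
      rw [Set.indicator_of_notMem this]
    · -- gap > 0 : eventually in A K, and in L
      have hev : ∀ᶠ K in atTop, 0 < u₁ K p - u₀ K p :=
        hpG.eventually (eventually_gt_nhds hgt)
      have hqgt : 0 < q p.1.2 - q p.1.1 := by nlinarith [hpH.2]
      have hL : p ∈ L := by
        simp only [L, Set.mem_setOf_eq]
        linarith
      rw [Set.indicator_of_mem hL]
      refine Tendsto.congr' ?_ tendsto_const_nhds
      filter_upwards [hev] with K hK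
      have : p ∈ A K := by
        simp only [A, Set.mem_setOf_eq]
        linarith
      rw [Set.indicator_of_mem this]
  -- dominated convergence for the indicator integrals
  have hintTendsto : Tendsto
      (fun K => ∫ p, (A K).indicator (fun _ => (1:ℝ)) p ∂(η.prod κ)) atTop
      (𝓝 (∫ p, L.indicator (fun _ => (1:ℝ)) p ∂(η.prod κ))) := by
    refine tendsto_integral_of_dominated_convergence (fun _ => (1:ℝ)) ?_ ?_ ?_ hind
    · intro K
      exact ((measurable_const.indicator (hmA K)).aestronglyMeasurable)
    · exact integrable_const 1
    · intro K
      refine ae_of_all _ (fun p => ?_)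
      by_cases hp : p ∈ A K <;>
        simp [Set.indicator_of_mem, Set.indicator_of_notMem, hp]
  have hIA : ∀ K, ∫ p, (A K).indicator (fun _ => (1:ℝ)) p ∂(η.prod κ)
      = ((η.prod κ) (A K)).toReal := by
    intro K; exact integral_indicator_one (hmA K)
  have hIL : ∫ p, L.indicator (fun _ => (1:ℝ)) p ∂(η.prod κ) = ((η.prod κ) L).toReal :=
    integral_indicator_one hmL
  rw [hIL] at hintTendsto
  simp only [hIA] at hintTendsto
  have hfin : Tendsto (fun K => (η.prod κ) (A K)) atTop (𝓝 ((η.prod κ) L)) :=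
    (ENNReal.tendsto_toReal_iff (fun K => measure_ne_top _ _) (measure_ne_top _ _)).mp
      hintTendsto
  simp only [hAeq, hLeq]
  exact hfin
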